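/- Let T > 0, n > 0, M > 0, w ∈ ℝ³ with w ≠ 0, f⁰(C) = n (2π T)^(-3/2) exp(-|C|²/(2T)), and let φ : ℝ³ → ℝ satisfy ∫ f⁰ φ dC = 0 and ∫ f⁰ φ ½|C|² dC = 0. Define δφ²(C) = -(M/T)(C·w) φ(C) + (M²/(2T))(w·w + (C·w)²/T). Writing V = (1/n) ∫ C f⁰(C) φ(C) dC and q = ∫ ½|C|² C f⁰(C) φ(C) dC, one has ∫ f⁰ δφ² dC = (M/T) n w·(M w - V) and ∫ f⁰ δφ² ½|C|² dC = M w·(2 M n w - q/T). Consequently both projections vanish for all admissible φ only when w = 0. -/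

import Mathlib

open MeasureTheory Real
open scoped RealInnerProductSpace

namespace ShiftAux

open Filter


noncomputable def gmom (b : ℝ) (k : ℕ) : ℝ := ∫ t : ℝ, t ^ k * Real.exp (-b * t ^ 2)

lemma integrable_pow_gauss {b : ℝ} (hb : 0 < b) (k : ℕ) :
    Integrable (fun t : ℝ => t ^ k * Real.exp (-b * t ^ 2)) := by
  have h := integrable_rpow_mul_exp_neg_mul_sq hb
    (s := (k : ℝ)) (lt_of_lt_of_le neg_one_lt_zero (Nat.cast_nonneg k))
  simpa [Real.rpow_natCast] using h

lemma gmom_odd (b : ℝ) (k : ℕ) : gmom b (2 * k + 1) = 0 := by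
  have h := MeasurePreserving.integral_comp
    (Measure.measurePreserving_neg (volume : Measure ℝ))
    (Homeomorph.neg ℝ).measurableEmbedding
    (fun t : ℝ => t ^ (2 * k + 1) * Real.exp (-b * t ^ 2))
  have h2 : (fun x : ℝ => (-x) ^ (2 * k + 1) * Real.exp (-b * (-x) ^ 2))
      = fun t : ℝ => -(t ^ (2 * k + 1) * Real.exp (-b * t ^ 2)) := by
    funext t
    have : (-t : ℝ) ^ (2 * k + 1) = -(t ^ (2 * k + 1)) := Odd.neg_pow ⟨k, by ring⟩ t
    simp [this, neg_sq]
  rw [h2, integral_neg] at h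
  unfold gmom
  linarith

lemma gmom_zero {b : ℝ} (hb : 0 < b) : gmom b 0 = Real.sqrt (π / b) := by
  unfold gmom
  simpa using integral_gaussian b

lemma hasDerivAt_H {b : ℝ} (k : ℕ) (t : ℝ) :
    HasDerivAt (fun t : ℝ => t ^ (k + 1) * Real.exp (-b * t ^ 2))
      ((k + 1 : ℝ) * (t ^ k * Real.exp (-b * t ^ 2))
        - (2 * b) * (t ^ (k + 2) * Real.exp (-b * t ^ 2))) t := by
  have h1 : HasDerivAt (fun t : ℝ => t ^ (k + 1)) ((k + 1 : ℝ) * t ^ k) t := by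
    simpa using hasDerivAt_pow (k + 1) t
  have h0 : HasDerivAt (fun t : ℝ => -b * t ^ 2) (-b * (2 * t)) t := by
    simpa using (hasDerivAt_pow 2 t).const_mul (-b)
  have h2 := h0.exp
  convert h1.mul h2 using 1
  · rfl
  · rfl
  · rfl
  · ring

lemma tendsto_H {b : ℝ} (hb : 0 < b) (m : ℕ) :
    Tendsto (fun t : ℝ => t ^ m * Real.exp (-b * t ^ 2)) atTop (nhds 0) := by
  have ho := rpow_mul_exp_neg_mul_sq_isLittleO_exp_neg hb (m : ℝ)
  have ho' : (fun t : ℝ => t ^ m * Real.exp (-b * t ^ 2)) =o[atTop]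
      fun x : ℝ => Real.exp (-(1 / 2) * x) := by
    simpa [Real.rpow_natCast] using ho
  refine ho'.isBigO.trans_tendsto ?_
  have : Tendsto (fun x : ℝ => -(1 / 2) * x) atTop atBot := by
    apply Tendsto.const_mul_atTop_of_neg (by norm_num) tendsto_id
  exact Real.tendsto_exp_atBot.comp this

lemma gmom_rec {b : ℝ} (hb : 0 < b) (k : ℕ) :
    gmom b (k + 2) = (k + 1 : ℝ) / (2 * b) * gmom b k := by
  set D : ℝ → ℝ := fun t =>
    (k + 1 : ℝ) * (t ^ k * Real.exp (-b * t ^ 2))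
      - (2 * b) * (t ^ (k + 2) * Real.exp (-b * t ^ 2)) with hD
  have hDint : Integrable D :=
    ((integrable_pow_gauss hb k).const_mul _).sub
      ((integrable_pow_gauss hb (k + 2)).const_mul _)
  have hFTC : ∀ A : ℝ, ∫ t in (-A)..A, D t =
      A ^ (k + 1) * Real.exp (-b * A ^ 2)
        - (-A) ^ (k + 1) * Real.exp (-b * (-A) ^ 2) := by
    intro A
    exact intervalIntegral.integral_eq_sub_of_hasDerivAt
      (fun t _ => hasDerivAt_H k t) hDint.intervalIntegrable
  have hlim := intervalIntegral_tendsto_integral hDint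
    tendsto_neg_atTop_atBot tendsto_id
  have hzero : Tendsto (fun A : ℝ => A ^ (k + 1) * Real.exp (-b * A ^ 2)
      - (-A) ^ (k + 1) * Real.exp (-b * (-A) ^ 2)) atTop (nhds 0) := by
    have h1 := tendsto_H hb (k + 1)
    have h2 : Tendsto (fun A : ℝ => (-A) ^ (k + 1) * Real.exp (-b * (-A) ^ 2))
        atTop (nhds 0) := by
      have : (fun A : ℝ => (-A) ^ (k + 1) * Real.exp (-b * (-A) ^ 2))
          = fun A : ℝ => (-1) ^ (k + 1) * (A ^ (k + 1) * Real.exp (-b * A ^ 2)) := by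
        funext A; rw [neg_pow]; ring_nf
      rw [this]
      simpa using h1.const_mul ((-1 : ℝ) ^ (k + 1))
    simpa using h1.sub h2
  have hint0 : ∫ t : ℝ, D t = 0 := by
    have h3 : Tendsto (fun A : ℝ => ∫ t in (-A)..A, D t) atTop
      (nhds (∫ t : ℝ, D t)) := hlim
    rw [funext hFTC] at h3
    exact tendsto_nhds_unique h3 hzero
  have hsplit : ∫ t : ℝ, D t = (k + 1 : ℝ) * gmom b k - (2 * b) * gmom b (k + 2) := by
    rw [hD]
    rw [integral_sub ((integrable_pow_gauss hb k).const_mul _)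
      ((integrable_pow_gauss hb (k + 2)).const_mul _),
      integral_const_mul, integral_const_mul]
    rfl
  rw [hsplit] at hint0
  field_simp
  linarith

lemma gmom_one (b : ℝ) : gmom b 1 = 0 := by simpa using gmom_odd b 0
lemma gmom_three (b : ℝ) : gmom b 3 = 0 := by simpa using gmom_odd b 1

lemma gmom_two {b : ℝ} (hb : 0 < b) : gmom b 2 = 1 / (2 * b) * gmom b 0 := by
  simpa using gmom_rec hb 0

lemma gmom_four {b : ℝ} (hb : 0 < b) : gmom b 4 = 3 / (2 * b) * gmom b 2 := by
  have := gmom_rec hb 2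
  norm_num at this
  linarith

noncomputable def g3 (b : ℝ) (x : Fin 3 → ℝ) : ℝ := ∏ l, Real.exp (-b * x l ^ 2)

noncomputable def Gp (b : ℝ) (p : Fin 3 → ℕ) (x : Fin 3 → ℝ) : ℝ :=
  ∏ l, (x l ^ p l * Real.exp (-b * x l ^ 2))

lemma Gp_int {b : ℝ} (hb : 0 < b) (p : Fin 3 → ℕ) : Integrable (Gp b p) :=
  Integrable.fintype_prod (f := fun l (t : ℝ) => t ^ p l * Real.exp (-b * t ^ 2))
    (fun l => integrable_pow_gauss hb (p l))

lemma Gp_val (b : ℝ) (p : Fin 3 → ℕ) :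
    ∫ x : Fin 3 → ℝ, Gp b p x = ∏ l, gmom b (p l) :=
  integral_fintype_prod_eq_prod (fun l (t : ℝ) => t ^ p l * Real.exp (-b * t ^ 2))

lemma g3_eq (b : ℝ) : g3 b = Gp b (fun _ => 0) := by
  funext x; simp [g3, Gp]

lemma g3_int {b : ℝ} (hb : 0 < b) : Integrable (g3 b) := by
  rw [g3_eq]; exact Gp_int hb _

lemma g3_val (b : ℝ) : ∫ x : Fin 3 → ℝ, g3 b x = gmom b 0 ^ 3 := by
  rw [show (fun x : Fin 3 → ℝ => g3 b x) = Gp b (fun _ => 0) from g3_eq b, Gp_val]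
  simp [Fin.prod_univ_three]
  try ring

def p2 (i j : Fin 3) (l : Fin 3) : ℕ := (if l = i then 1 else 0) + (if l = j then 1 else 0)
def p3 (k i j : Fin 3) (l : Fin 3) : ℕ := (if l = k then 2 else 0) + p2 i j l

lemma mono2_eq (b : ℝ) (i j : Fin 3) :
    (fun x : Fin 3 → ℝ => (x i * x j) * g3 b x) = Gp b (p2 i j) := by
  funext x
  simp only [Gp, g3, p2, pow_add, pow_ite, pow_one, pow_zero, Finset.prod_mul_distrib,
    Finset.prod_ite_eq', Finset.mem_univ, if_true]

lemma mono3_eq (b : ℝ) (k i j : Fin 3) :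
    (fun x : Fin 3 → ℝ => x k ^ 2 * (x i * x j) * g3 b x) = Gp b (p3 k i j) := by
  funext x
  simp only [Gp, g3, p3, p2, pow_add, pow_ite, pow_one, pow_zero, Finset.prod_mul_distrib,
    Finset.prod_ite_eq', Finset.mem_univ, if_true]

lemma mono2_int {b : ℝ} (hb : 0 < b) (i j : Fin 3) :
    Integrable (fun x : Fin 3 → ℝ => (x i * x j) * g3 b x) := by
  rw [mono2_eq]; exact Gp_int hb _

lemma mono3_int {b : ℝ} (hb : 0 < b) (k i j : Fin 3) :
    Integrable (fun x : Fin 3 → ℝ => x k ^ 2 * (x i * x j) * g3 b x) := by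
  rw [mono3_eq]; exact Gp_int hb _

lemma mono2_val (b : ℝ) (i j : Fin 3) :
    ∫ x : Fin 3 → ℝ, (x i * x j) * g3 b x
      = if i = j then gmom b 2 * gmom b 0 ^ 2 else 0 := by
  rw [mono2_eq, Gp_val]
  fin_cases i <;> fin_cases j <;>
    simp [p2, Fin.prod_univ_three, gmom_one] <;>
      (first | exact Or.inl trivial | exact Or.inl (by ring) | ring)

lemma mono3_val (b : ℝ) (k i j : Fin 3) :
    ∫ x : Fin 3 → ℝ, x k ^ 2 * (x i * x j) * g3 b x
      = if i = j then (if k = i then gmom b 4 * gmom b 0 ^ 2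
          else gmom b 2 ^ 2 * gmom b 0) else 0 := by
  rw [mono3_eq, Gp_val]
  fin_cases k <;> fin_cases i <;> fin_cases j <;>
    simp [p3, p2, Fin.prod_univ_three, gmom_one, gmom_three] <;>
      (first | exact Or.inl trivial | exact Or.inl (by ring) | ring)

lemma expandC (u : Fin 3 → ℝ) (b : ℝ) :
    (fun x : Fin 3 → ℝ => (∑ i, u i * x i) ^ 2 * g3 b x)
      = fun x => ∑ i, ∑ j, (u i * u j) * ((x i * x j) * g3 b x) := by
  funext x; simp only [Fin.sum_univ_three]; ring

lemma expandD (b : ℝ) :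
    (fun x : Fin 3 → ℝ => (∑ k, x k ^ 2) * g3 b x)
      = fun x => ∑ k, (x k * x k) * g3 b x := by
  funext x; simp only [Fin.sum_univ_three]; ring

lemma expandE (u : Fin 3 → ℝ) (b : ℝ) :
    (fun x : Fin 3 → ℝ => (∑ k, x k ^ 2) * (∑ i, u i * x i) ^ 2 * g3 b x)
      = fun x => ∑ k, ∑ i, ∑ j, (u i * u j) * (x k ^ 2 * (x i * x j) * g3 b x) := by
  funext x; simp only [Fin.sum_univ_three]; ring

lemma piC_int {b : ℝ} (hb : 0 < b) (u : Fin 3 → ℝ) :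
    Integrable (fun x : Fin 3 → ℝ => (∑ i, u i * x i) ^ 2 * g3 b x) := by
  rw [expandC]
  exact integrable_finset_sum _ fun i _ => integrable_finset_sum _ fun j _ =>
    (mono2_int hb i j).const_mul _

lemma piD_int {b : ℝ} (hb : 0 < b) :
    Integrable (fun x : Fin 3 → ℝ => (∑ k, x k ^ 2) * g3 b x) := by
  rw [expandD]
  exact integrable_finset_sum _ fun k _ => mono2_int hb k k

lemma piE_int {b : ℝ} (hb : 0 < b) (u : Fin 3 → ℝ) :
    Integrable (fun x : Fin 3 → ℝ => (∑ k, x k ^ 2) * (∑ i, u i * x i) ^ 2 * g3 b x) := by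
  rw [expandE]
  exact integrable_finset_sum _ fun k _ => integrable_finset_sum _ fun i _ =>
    integrable_finset_sum _ fun j _ => (mono3_int hb k i j).const_mul _

lemma piC_val {b : ℝ} (hb : 0 < b) (u : Fin 3 → ℝ) :
    ∫ x : Fin 3 → ℝ, (∑ i, u i * x i) ^ 2 * g3 b x
      = (gmom b 2 * gmom b 0 ^ 2) * ∑ i, u i ^ 2 := by
  rw [expandC]
  rw [integral_finset_sum _ fun i _ => integrable_finset_sum _ fun j _ =>
    (mono2_int hb i j).const_mul _]
  have h1 : ∀ i : Fin 3, (∫ x : Fin 3 → ℝ, ∑ j, (u i * u j) * ((x i * x j) * g3 b x))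
      = ∑ j : Fin 3, (u i * u j) * ∫ x : Fin 3 → ℝ, (x i * x j) * g3 b x := by
    intro i
    rw [integral_finset_sum _ fun j _ => (mono2_int hb i j).const_mul _]
    exact Finset.sum_congr rfl fun j _ => integral_const_mul _ _
  simp only [h1, mono2_val]
  simp [Fin.sum_univ_three]
  ring

lemma piD_val {b : ℝ} (hb : 0 < b) :
    ∫ x : Fin 3 → ℝ, (∑ k, x k ^ 2) * g3 b x
      = 3 * (gmom b 2 * gmom b 0 ^ 2) := by
  rw [expandD, integral_finset_sum _ fun k _ => mono2_int hb k k]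
  simp only [mono2_val]
  simp [Fin.sum_univ_three]
  try ring

lemma piE_val {b : ℝ} (hb : 0 < b) (u : Fin 3 → ℝ) :
    ∫ x : Fin 3 → ℝ, (∑ k, x k ^ 2) * (∑ i, u i * x i) ^ 2 * g3 b x
      = (gmom b 4 * gmom b 0 ^ 2 + 2 * (gmom b 2 ^ 2 * gmom b 0)) * ∑ i, u i ^ 2 := by
  rw [expandE]
  rw [integral_finset_sum _ fun k _ => integrable_finset_sum _ fun i _ =>
    integrable_finset_sum _ fun j _ => (mono3_int hb k i j).const_mul _]
  have h1 : ∀ k : Fin 3,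
      (∫ x : Fin 3 → ℝ, ∑ i, ∑ j, (u i * u j) * (x k ^ 2 * (x i * x j) * g3 b x))
      = ∑ i : Fin 3, ∑ j : Fin 3, (u i * u j)
          * ∫ x : Fin 3 → ℝ, x k ^ 2 * (x i * x j) * g3 b x := by
    intro k
    rw [integral_finset_sum _ fun i _ => integrable_finset_sum _ fun j _ =>
      (mono3_int hb k i j).const_mul _]
    refine Finset.sum_congr rfl fun i _ => ?_
    rw [integral_finset_sum _ fun j _ => (mono3_int hb k i j).const_mul _]
    exact Finset.sum_congr rfl fun j _ => integral_const_mul _ _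
  simp only [h1, mono3_val]
  simp [Fin.sum_univ_three]
  ring

/-! ### Euclidean space transfer -/

noncomputable abbrev ee := (MeasurableEquiv.toLp 2 (Fin 3 → ℝ)).symm

lemma transfer_integral (F : EuclideanSpace ℝ (Fin 3) → ℝ) :
    ∫ C, F C = ∫ x : Fin 3 → ℝ, F (ee.symm x) :=
  ((MeasurePreserving.symm _
    (EuclideanSpace.volume_preserving_symm_measurableEquiv_toLp (Fin 3))).integral_comp' F).symm

lemma transfer_integrable (F : EuclideanSpace ℝ (Fin 3) → ℝ)
    (h : Integrable fun x : Fin 3 → ℝ => F (ee.symm x)) : Integrable F :=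
  ((MeasurePreserving.symm _
    (EuclideanSpace.volume_preserving_symm_measurableEquiv_toLp (Fin 3))).integrable_comp_emb
    (MeasurableEquiv.measurableEmbedding _)).mp h

lemma norm_sq_coords (v : EuclideanSpace ℝ (Fin 3)) : ‖v‖ ^ 2 = ∑ i, v i ^ 2 := by
  rw [EuclideanSpace.norm_eq, Real.sq_sqrt (by positivity)]
  simp [sq_abs]

lemma inner_coords (v w : EuclideanSpace ℝ (Fin 3)) : ⟪v, w⟫ = ∑ i, v i * w i := by
  simp [PiLp.inner_apply, RCLike.inner_apply, conj_trivial, mul_comm]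

section Euclid

variable {T n : ℝ} {f : EuclideanSpace ℝ (Fin 3) → ℝ} {w : EuclideanSpace ℝ (Fin 3)}

lemma f_coords (hT : 0 < T)
    (hf : ∀ C, f C = n * (2 * π * T) ^ (-(3 : ℝ) / 2) * Real.exp (-‖C‖ ^ 2 / (2 * T)))
    (x : Fin 3 → ℝ) :
    f (ee.symm x) = n * (2 * π * T) ^ (-(3 : ℝ) / 2) * g3 (2 * T)⁻¹ x := by
  rw [hf]
  congr 1
  have h1 : -‖(ee.symm x : EuclideanSpace ℝ (Fin 3))‖ ^ 2 / (2 * T)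
      = ∑ i, -((2 * T)⁻¹ * x i ^ 2) := by
    rw [norm_sq_coords]
    have : ∀ i : Fin 3, (ee.symm x : EuclideanSpace ℝ (Fin 3)) i = x i := fun _ => rfl
    simp only [this]
    rw [Finset.sum_neg_distrib, ← Finset.mul_sum]
    ring
  rw [h1, Real.exp_sum]
  unfold g3
  exact Finset.prod_congr rfl fun i _ => by rw [neg_mul]

lemma key_const (hT : 0 < T) :
    n * (2 * π * T) ^ (-(3 : ℝ) / 2) * gmom (2 * T)⁻¹ 0 ^ 3 = n := by
  have hy : (0 : ℝ) < 2 * π * T := by positivity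
  have hb : (0 : ℝ) < (2 * T)⁻¹ := by positivity
  rw [gmom_zero hb]
  have h2 : π / (2 * T)⁻¹ = 2 * π * T := by field_simp
  rw [h2, Real.sqrt_eq_rpow, ← Real.rpow_natCast ((2 * π * T) ^ ((1:ℝ)/2)) 3,
    ← Real.rpow_mul hy.le, mul_assoc, ← Real.rpow_add hy]
  norm_num

lemma gmom_two' (hT : 0 < T) : gmom (2 * T)⁻¹ 2 = T * gmom (2 * T)⁻¹ 0 := by
  have hb : (0 : ℝ) < (2 * T)⁻¹ := by positivity
  rw [gmom_two hb]
  congr 1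
  field_simp

lemma gmom_four' (hT : 0 < T) : gmom (2 * T)⁻¹ 4 = 3 * T ^ 2 * gmom (2 * T)⁻¹ 0 := by
  have hb : (0 : ℝ) < (2 * T)⁻¹ := by positivity
  rw [gmom_four hb, gmom_two' hT]
  have h : 3 / (2 * (2 * T)⁻¹) = 3 * T / 2 * 2 := by field_simp
  field_simp


lemma shapeA (hT : 0 < T)
    (hf : ∀ C, f C = n * (2 * π * T) ^ (-(3 : ℝ) / 2) * Real.exp (-‖C‖ ^ 2 / (2 * T))) :
    (fun x : Fin 3 → ℝ => f (ee.symm x))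
      = fun x => (n * (2 * π * T) ^ (-(3 : ℝ) / 2)) * g3 (2 * T)⁻¹ x :=
  funext (f_coords hT hf)

lemma EA_int (hT : 0 < T)
    (hf : ∀ C, f C = n * (2 * π * T) ^ (-(3 : ℝ) / 2) * Real.exp (-‖C‖ ^ 2 / (2 * T))) :
    Integrable f := by
  have hb : (0 : ℝ) < (2 * T)⁻¹ := by positivity
  apply transfer_integrable
  rw [show (fun x : Fin 3 → ℝ => f (ee.symm x))
    = fun x => (n * (2 * π * T) ^ (-(3 : ℝ) / 2)) * g3 (2 * T)⁻¹ x from shapeA hT hf]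
  exact (g3_int hb).const_mul _

lemma EA_val (hT : 0 < T)
    (hf : ∀ C, f C = n * (2 * π * T) ^ (-(3 : ℝ) / 2) * Real.exp (-‖C‖ ^ 2 / (2 * T))) :
    ∫ C, f C = n := by
  rw [transfer_integral f, show (fun x : Fin 3 → ℝ => f (ee.symm x))
    = fun x => (n * (2 * π * T) ^ (-(3 : ℝ) / 2)) * g3 (2 * T)⁻¹ x from shapeA hT hf,
    integral_const_mul, g3_val]
  exact key_const hT

lemma sum_sq_inner (w : EuclideanSpace ℝ (Fin 3)) : ∑ i, w i ^ 2 = ⟪w, w⟫ := by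
  rw [inner_coords]
  exact Finset.sum_congr rfl fun i _ => pow_two (w i)

lemma shapeC (hT : 0 < T)
    (hf : ∀ C, f C = n * (2 * π * T) ^ (-(3 : ℝ) / 2) * Real.exp (-‖C‖ ^ 2 / (2 * T)))
    (w : EuclideanSpace ℝ (Fin 3)) :
    (fun x : Fin 3 → ℝ => f (ee.symm x) * ⟪(ee.symm x : EuclideanSpace ℝ (Fin 3)), w⟫ ^ 2)
      = fun x => (n * (2 * π * T) ^ (-(3 : ℝ) / 2)) *
          ((∑ i, w i * x i) ^ 2 * g3 (2 * T)⁻¹ x) := by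
  funext x
  rw [f_coords hT hf, inner_coords]
  have hc : ∀ i, (ee.symm x : EuclideanSpace ℝ (Fin 3)) i = x i := fun _ => rfl
  simp only [hc, Fin.sum_univ_three]
  ring

lemma EC_int (hT : 0 < T)
    (hf : ∀ C, f C = n * (2 * π * T) ^ (-(3 : ℝ) / 2) * Real.exp (-‖C‖ ^ 2 / (2 * T)))
    (w : EuclideanSpace ℝ (Fin 3)) :
    Integrable (fun C : EuclideanSpace ℝ (Fin 3) => f C * ⟪C, w⟫ ^ 2) := by
  have hb : (0 : ℝ) < (2 * T)⁻¹ := by positivity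
  apply transfer_integrable
  rw [show (fun x : Fin 3 → ℝ => f (ee.symm x) * ⟪(ee.symm x : EuclideanSpace ℝ (Fin 3)), w⟫ ^ 2)
    = _ from shapeC hT hf w]
  exact ((piC_int hb fun i => w i).const_mul _)

lemma EC_val (hT : 0 < T)
    (hf : ∀ C, f C = n * (2 * π * T) ^ (-(3 : ℝ) / 2) * Real.exp (-‖C‖ ^ 2 / (2 * T)))
    (w : EuclideanSpace ℝ (Fin 3)) :
    ∫ C, f C * ⟪C, w⟫ ^ 2 = n * T * ⟪w, w⟫ := by
  rw [transfer_integral (fun C => f C * ⟪C, w⟫ ^ 2)]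
  rw [show (fun x : Fin 3 → ℝ => f (ee.symm x) * ⟪(ee.symm x : EuclideanSpace ℝ (Fin 3)), w⟫ ^ 2)
    = _ from shapeC hT hf w]
  have hb : (0 : ℝ) < (2 * T)⁻¹ := by positivity
  rw [integral_const_mul, piC_val hb, gmom_two' hT, sum_sq_inner]
  linear_combination (T * ⟪w, w⟫) * key_const (n := n) hT

lemma shapeD (hT : 0 < T)
    (hf : ∀ C, f C = n * (2 * π * T) ^ (-(3 : ℝ) / 2) * Real.exp (-‖C‖ ^ 2 / (2 * T))) :
    (fun x : Fin 3 → ℝ => f (ee.symm x) *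
        (1 / 2 * ‖(ee.symm x : EuclideanSpace ℝ (Fin 3))‖ ^ 2))
      = fun x => (n * (2 * π * T) ^ (-(3 : ℝ) / 2) * (1 / 2)) *
          ((∑ k, x k ^ 2) * g3 (2 * T)⁻¹ x) := by
  funext x
  rw [f_coords hT hf, norm_sq_coords]
  have hc : ∀ i, (ee.symm x : EuclideanSpace ℝ (Fin 3)) i = x i := fun _ => rfl
  simp only [hc, Fin.sum_univ_three]
  ring

lemma ED_int (hT : 0 < T)
    (hf : ∀ C, f C = n * (2 * π * T) ^ (-(3 : ℝ) / 2) * Real.exp (-‖C‖ ^ 2 / (2 * T))) :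
    Integrable (fun C : EuclideanSpace ℝ (Fin 3) => f C * (1 / 2 * ‖C‖ ^ 2)) := by
  have hb : (0 : ℝ) < (2 * T)⁻¹ := by positivity
  apply transfer_integrable
  rw [show (fun x : Fin 3 → ℝ => f (ee.symm x) *
      (1 / 2 * ‖(ee.symm x : EuclideanSpace ℝ (Fin 3))‖ ^ 2)) = _ from shapeD hT hf]
  exact ((piD_int hb).const_mul _)

lemma ED_val (hT : 0 < T)
    (hf : ∀ C, f C = n * (2 * π * T) ^ (-(3 : ℝ) / 2) * Real.exp (-‖C‖ ^ 2 / (2 * T))) :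
    ∫ C, f C * (1 / 2 * ‖C‖ ^ 2) = 3 / 2 * n * T := by
  rw [transfer_integral (fun C => f C * (1 / 2 * ‖C‖ ^ 2))]
  rw [show (fun x : Fin 3 → ℝ => f (ee.symm x) *
      (1 / 2 * ‖(ee.symm x : EuclideanSpace ℝ (Fin 3))‖ ^ 2)) = _ from shapeD hT hf]
  have hb : (0 : ℝ) < (2 * T)⁻¹ := by positivity
  rw [integral_const_mul, piD_val hb, gmom_two' hT]
  linear_combination (3 / 2 * T) * key_const (n := n) hT

lemma shapeE (hT : 0 < T)
    (hf : ∀ C, f C = n * (2 * π * T) ^ (-(3 : ℝ) / 2) * Real.exp (-‖C‖ ^ 2 / (2 * T)))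
    (w : EuclideanSpace ℝ (Fin 3)) :
    (fun x : Fin 3 → ℝ => f (ee.symm x) *
        (1 / 2 * ‖(ee.symm x : EuclideanSpace ℝ (Fin 3))‖ ^ 2) *
        ⟪(ee.symm x : EuclideanSpace ℝ (Fin 3)), w⟫ ^ 2)
      = fun x => (n * (2 * π * T) ^ (-(3 : ℝ) / 2) * (1 / 2)) *
          ((∑ k, x k ^ 2) * (∑ i, w i * x i) ^ 2 * g3 (2 * T)⁻¹ x) := by
  funext x
  rw [f_coords hT hf, norm_sq_coords, inner_coords]
  have hc : ∀ i, (ee.symm x : EuclideanSpace ℝ (Fin 3)) i = x i := fun _ => rfl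
  simp only [hc, Fin.sum_univ_three]
  ring

lemma EE_int (hT : 0 < T)
    (hf : ∀ C, f C = n * (2 * π * T) ^ (-(3 : ℝ) / 2) * Real.exp (-‖C‖ ^ 2 / (2 * T)))
    (w : EuclideanSpace ℝ (Fin 3)) :
    Integrable (fun C : EuclideanSpace ℝ (Fin 3) =>
      f C * (1 / 2 * ‖C‖ ^ 2) * ⟪C, w⟫ ^ 2) := by
  have hb : (0 : ℝ) < (2 * T)⁻¹ := by positivity
  apply transfer_integrable
  rw [show (fun x : Fin 3 → ℝ => f (ee.symm x) *
      (1 / 2 * ‖(ee.symm x : EuclideanSpace ℝ (Fin 3))‖ ^ 2) *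
      ⟪(ee.symm x : EuclideanSpace ℝ (Fin 3)), w⟫ ^ 2) = _ from shapeE hT hf w]
  exact ((piE_int hb fun i => w i).const_mul _)

lemma EE_val (hT : 0 < T)
    (hf : ∀ C, f C = n * (2 * π * T) ^ (-(3 : ℝ) / 2) * Real.exp (-‖C‖ ^ 2 / (2 * T)))
    (w : EuclideanSpace ℝ (Fin 3)) :
    ∫ C, f C * (1 / 2 * ‖C‖ ^ 2) * ⟪C, w⟫ ^ 2 = 5 / 2 * n * T ^ 2 * ⟪w, w⟫ := by
  rw [transfer_integral (fun C => f C * (1 / 2 * ‖C‖ ^ 2) * ⟪C, w⟫ ^ 2)]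
  rw [show (fun x : Fin 3 → ℝ => f (ee.symm x) *
      (1 / 2 * ‖(ee.symm x : EuclideanSpace ℝ (Fin 3))‖ ^ 2) *
      ⟪(ee.symm x : EuclideanSpace ℝ (Fin 3)), w⟫ ^ 2) = _ from shapeE hT hf w]
  have hb : (0 : ℝ) < (2 * T)⁻¹ := by positivity
  rw [integral_const_mul, piE_val hb, gmom_two' hT, gmom_four' hT, sum_sq_inner]
  linear_combination (5 / 2 * T ^ 2 * ⟪w, w⟫) * key_const (n := n) hT

end Euclid

end ShiftAux

/-- A nonzero first-order velocity shift `w` breaks the scalar constraints on the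
second-order electron perturbation: with `δφ²(C) = -(M/T)(C·w)φ(C) + (M²/(2T))(w·w + (C·w)²/T)`,
the projections on the collisional invariants are `(M/T) n w·(Mw - V)` and
`M w·(2Mn w - q/T)`, which cannot both vanish for all admissible `φ` unless `w = 0`. -/
theorem shift_breaks_second_order_constraints (T M n : ℝ) (hT : 0 < T) (hM : 0 < M)
    (hn : 0 < n) (w : EuclideanSpace ℝ (Fin 3)) (hw : w ≠ 0)
    (f : EuclideanSpace ℝ (Fin 3) → ℝ)
    (hf : ∀ C, f C = n * (2 * π * T) ^ (-(3 : ℝ) / 2) * Real.exp (-‖C‖ ^ 2 / (2 * T)))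
    (φ : EuclideanSpace ℝ (Fin 3) → ℝ)
    (hφ_int : Integrable (fun C : EuclideanSpace ℝ (Fin 3) => f C * φ C))
    (hφE_int : Integrable (fun C : EuclideanSpace ℝ (Fin 3) => f C * φ C * (1 / 2 * ‖C‖ ^ 2)))
    (hV_int : Integrable (fun C : EuclideanSpace ℝ (Fin 3) => (f C * φ C) • C))
    (hq_int : Integrable (fun C : EuclideanSpace ℝ (Fin 3) => (1 / 2 * ‖C‖ ^ 2 * f C * φ C) • C))
    (hφ1 : (∫ C, f C * φ C) = 0)
    (hφ2 : (∫ C, f C * φ C * (1 / 2 * ‖C‖ ^ 2)) = 0)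
    (δφ2 : EuclideanSpace ℝ (Fin 3) → ℝ)
    (hδφ2 : ∀ C, δφ2 C =
      -(M / T) * ⟪C, w⟫ * φ C + M ^ 2 / (2 * T) * (⟪w, w⟫ + ⟪C, w⟫ ^ 2 / T))
    (V q : EuclideanSpace ℝ (Fin 3))
    (hV : V = (1 / n) • ∫ C, (f C * φ C) • C)
    (hq : q = ∫ C, (1 / 2 * ‖C‖ ^ 2 * f C * φ C) • C) :
    (∫ C, f C * δφ2 C) = M / T * n * ⟪w, M • w - V⟫ ∧
    (∫ C, f C * δφ2 C * (1 / 2 * ‖C‖ ^ 2)) = M * ⟪w, (2 * M * n) • w - (1 / T) • q⟫ ∧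
    ¬(M / T * n * ⟪w, M • w⟫ = 0 ∧ M * ⟪w, (2 * M * n) • w⟫ = 0) := by
  have hT' : T ≠ 0 := hT.ne'
  have hww : 0 < ⟪w, w⟫ := by
    rw [real_inner_self_eq_norm_sq]
    have h0 : 0 < ‖w‖ := norm_pos_iff.mpr hw
    positivity
  have part3 : ¬(M / T * n * ⟪w, M • w⟫ = 0 ∧ M * ⟪w, (2 * M * n) • w⟫ = 0) := by
    rintro ⟨h1, -⟩
    rw [real_inner_smul_right] at h1
    have : 0 < M / T * n * (M * ⟪w, w⟫) := by positivity
    linarith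
  have hIf : Integrable f := ShiftAux.EA_int hT hf
  have hIC := ShiftAux.EC_int hT hf w
  have hID := ShiftAux.ED_int hT hf
  have hIE := ShiftAux.EE_int hT hf w
  have hA1 : Integrable (fun C : EuclideanSpace ℝ (Fin 3) => (f C * φ C) * ⟪C, w⟫) := by
    have h := (innerSL ℝ w).integrable_comp hV_int
    refine h.congr (Filter.Eventually.of_forall fun C => ?_)
    show ⟪w, (f C * φ C) • C⟫ = (f C * φ C) * ⟪C, w⟫
    rw [real_inner_smul_right, real_inner_comm]
  have hA2 : Integrable (fun C : EuclideanSpace ℝ (Fin 3) =>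
      (1 / 2 * ‖C‖ ^ 2 * f C * φ C) * ⟪C, w⟫) := by
    have h := (innerSL ℝ w).integrable_comp hq_int
    refine h.congr (Filter.Eventually.of_forall fun C => ?_)
    show ⟪w, (1 / 2 * ‖C‖ ^ 2 * f C * φ C) • C⟫ = (1 / 2 * ‖C‖ ^ 2 * f C * φ C) * ⟪C, w⟫
    rw [real_inner_smul_right, real_inner_comm]
  have hJ1 : ∫ C, (f C * φ C) * ⟪C, w⟫ = ⟪w, ∫ C, (f C * φ C) • C⟫ := by
    rw [show (fun C : EuclideanSpace ℝ (Fin 3) => (f C * φ C) * ⟪C, w⟫)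
        = fun C => ⟪w, (f C * φ C) • C⟫ from funext fun C => by
      rw [real_inner_smul_right, real_inner_comm], integral_inner hV_int w]
  have hJ2 : ∫ C, (1 / 2 * ‖C‖ ^ 2 * f C * φ C) * ⟪C, w⟫ = ⟪w, q⟫ := by
    rw [show (fun C : EuclideanSpace ℝ (Fin 3) => (1 / 2 * ‖C‖ ^ 2 * f C * φ C) * ⟪C, w⟫)
        = fun C => ⟪w, (1 / 2 * ‖C‖ ^ 2 * f C * φ C) • C⟫ from funext fun C => by
      rw [real_inner_smul_right, real_inner_comm], integral_inner hq_int w, ← hq]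
  have hJn : (∫ C, (f C * φ C) • C) = n • V := by
    rw [hV, smul_smul, mul_one_div, div_self hn.ne', one_smul]
  have hsplit1 : (fun C : EuclideanSpace ℝ (Fin 3) => f C * δφ2 C)
      = fun C => (-(M / T)) * ((f C * φ C) * ⟪C, w⟫)
          + ((M ^ 2 / (2 * T) * ⟪w, w⟫) * f C
          + (M ^ 2 / (2 * T ^ 2)) * (f C * ⟪C, w⟫ ^ 2)) := by
    funext C
    rw [hδφ2 C]
    field_simp
  have hg1 : Integrable (fun C : EuclideanSpace ℝ (Fin 3) =>
      (M ^ 2 / (2 * T) * ⟪w, w⟫) * f C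
        + (M ^ 2 / (2 * T ^ 2)) * (f C * ⟪C, w⟫ ^ 2)) :=
    (hIf.const_mul _).add (hIC.const_mul _)
  have part1 : (∫ C, f C * δφ2 C) = M / T * n * ⟪w, M • w - V⟫ := by
    rw [hsplit1, integral_add (hA1.const_mul _) hg1,
      integral_add (hIf.const_mul _) (hIC.const_mul _),
      integral_const_mul, integral_const_mul, integral_const_mul,
      hJ1, hJn, real_inner_smul_right, ShiftAux.EA_val hT hf, ShiftAux.EC_val hT hf w,
      inner_sub_right, real_inner_smul_right]
    field_simp
    ring
  have hsplit2 : (fun C : EuclideanSpace ℝ (Fin 3) => f C * δφ2 C * (1 / 2 * ‖C‖ ^ 2))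
      = fun C => (-(M / T)) * ((1 / 2 * ‖C‖ ^ 2 * f C * φ C) * ⟪C, w⟫)
          + ((M ^ 2 / (2 * T) * ⟪w, w⟫) * (f C * (1 / 2 * ‖C‖ ^ 2))
          + (M ^ 2 / (2 * T ^ 2)) * (f C * (1 / 2 * ‖C‖ ^ 2) * ⟪C, w⟫ ^ 2)) := by
    funext C
    rw [hδφ2 C]
    field_simp
  have hg2 : Integrable (fun C : EuclideanSpace ℝ (Fin 3) =>
      (M ^ 2 / (2 * T) * ⟪w, w⟫) * (f C * (1 / 2 * ‖C‖ ^ 2))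
        + (M ^ 2 / (2 * T ^ 2)) * (f C * (1 / 2 * ‖C‖ ^ 2) * ⟪C, w⟫ ^ 2)) :=
    (hID.const_mul _).add (hIE.const_mul _)
  have part2 : (∫ C, f C * δφ2 C * (1 / 2 * ‖C‖ ^ 2))
      = M * ⟪w, (2 * M * n) • w - (1 / T) • q⟫ := by
    rw [hsplit2, integral_add (hA2.const_mul _) hg2,
      integral_add (hID.const_mul _) (hIE.const_mul _),
      integral_const_mul, integral_const_mul, integral_const_mul,
      hJ2, ShiftAux.ED_val hT hf, ShiftAux.EE_val hT hf w,
      inner_sub_right, real_inner_smul_right, real_inner_smul_right]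
    field_simp
    ring
  exact ⟨part1, part2, part3⟩
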